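/- arXiv:0908.4467 — 7 statements merged into one kernel-verified Lean document; each statement's English description precedes it below -/
import Mathlib

section
/- If there does not exist p in the simplex Δ with (Ãp)_1 = (Ãp)_2 = ... = (Ãp)_n, then there exists a vector c ∈ R^n with c_1 + ... + c_n = 0 and a δ > 0 such that cᵀÃx ≥ δ for all x ∈ Δ. -/
open Matrix Finset

theorem stmt_1 (n : ℕ) (A : Matrix (Fin n) (Fin n) ℝ)
    (h : ¬ ∃ p : Fin n → ℝ, (∀ i, 0 ≤ p i) ∧ (∑ i, p i = 1) ∧
        (∀ i j, A.mulVec p i = A.mulVec p j)) :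
    ∃ (c : Fin n → ℝ) (δ : ℝ), (∑ i, c i = 0) ∧ 0 < δ ∧
      ∀ x : Fin n → ℝ, (∀ i, 0 ≤ x i) → (∑ i, x i = 1) →
        δ ≤ c ⬝ᵥ A.mulVec x := by
  classical
  set one : Fin n → ℝ := fun _ => 1 with hone
  set S : Set (Fin n → ℝ) := A.mulVecLin '' stdSimplex ℝ (Fin n) with hSdef
  set T : Set (Fin n → ℝ) := ((Submodule.span ℝ {one} : Submodule ℝ (Fin n → ℝ)) : Set (Fin n → ℝ)) with hTdef
  have hSc : Convex ℝ S := (convex_stdSimplex ℝ (Fin n)).linear_image A.mulVecLin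
  have hScpt : IsCompact S :=
    (isCompact_stdSimplex ℝ (Fin n)).image A.mulVecLin.continuous_of_finiteDimensional
  have hTc : Convex ℝ T := (Submodule.span ℝ {one}).convex
  have hTcl : IsClosed T := (Submodule.span ℝ {one}).closed_of_finiteDimensional
  have hdisj : Disjoint S T := by
    rw [Set.disjoint_left]
    rintro y ⟨p, hp, rfl⟩ hyT
    rw [hTdef, SetLike.mem_coe, Submodule.mem_span_singleton] at hyT
    obtain ⟨t, ht⟩ := hyT
    exact h ⟨p, hp.1, hp.2, fun i j => by
      have hi := congrFun ht i
      have hj := congrFun ht j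
      simp [hone, Matrix.mulVecLin_apply] at hi hj
      rw [← hi, ← hj]⟩
  obtain ⟨f, u, v, hfu, huv, hvf⟩ :=
    geometric_hahn_banach_compact_closed hSc hScpt hTc hTcl hdisj
  have hf1 : f one = 0 := by
    by_contra hne
    -- f bounded below on the span of `one` forces f one = 0
    have key : ∀ t : ℝ, v < t * f one := by
      intro t
      have : (t • one) ∈ T := by
        rw [hTdef, SetLike.mem_coe]
        exact Submodule.smul_mem _ t (Submodule.mem_span_singleton_self one)
      have := hvf _ this
      simpa [_root_.map_smul, smul_eq_mul] using this
    rcases lt_or_gt_of_ne hne with hneg | hpos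
    · have := key ((v - 1) / f one)
      rw [div_mul_cancel₀ _ hne] at this
      linarith
    · have := key ((v - 1) / f one)
      rw [div_mul_cancel₀ _ hne] at this
      linarith
  have hv0 : v < 0 := by
    have h0 : (0 : Fin n → ℝ) ∈ T := by
      rw [hTdef, SetLike.mem_coe]; exact Submodule.zero_mem _
    have := hvf _ h0
    simpa using this
  refine ⟨fun i => -(f (Pi.single i 1)), -u, ?_, by linarith, ?_⟩
  · have hsum : (∑ i, Pi.single i (1 : ℝ)) = one := by
      have := Finset.univ_sum_single one
      simpa [hone] using this
    have hz : ∑ i, f (Pi.single i 1) = 0 := by rw [← map_sum, hsum, hf1]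
    calc ∑ i, (fun i => -(f (Pi.single i 1))) i = -(∑ i, f (Pi.single i 1)) := by simp
      _ = 0 := by rw [hz, neg_zero]
  · intro x hx0 hx1
    have hxS : A.mulVec x ∈ S := ⟨x, ⟨hx0, hx1⟩, by simp [Matrix.mulVecLin_apply]⟩
    have hfx := hfu _ hxS
    have hrepr : f (A.mulVec x) = ∑ i, (A.mulVec x i) * f (Pi.single i 1) := by
      have hx : A.mulVec x = ∑ i, Pi.single i (A.mulVec x i) :=
        (Finset.univ_sum_single (A.mulVec x)).symm
      conv_lhs => rw [hx]
      rw [map_sum]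
      refine Finset.sum_congr rfl fun i _ => ?_
      have : Pi.single i (A.mulVec x i) = (A.mulVec x i) • (Pi.single i 1 : Fin n → ℝ) := by
        rw [← Pi.single_smul, smul_eq_mul, mul_one]
      rw [this, _root_.map_smul, smul_eq_mul]
    have : (fun i => -(f (Pi.single i 1))) ⬝ᵥ A.mulVec x = -(f (A.mulVec x)) := by
      rw [hrepr, dotProduct, ← Finset.sum_neg_distrib]
      congr 1; funext i; ring
    rw [this]
    linarith
end

section
/- Suppose the n×n matrix A satisfies a_{ij} + a_{ji} - a_{ii} - a_{jj} = (γ/2)(σ_i² + σ_j²) for all i ≠ j, where σ_1,...,σ_n > 0. Then A is conditionally negative definite if γ > 0 and conditionally positive definite if γ < 0; that is, for every nonzero y with y_1 + ... + y_n = 0 one has 2yᵀAy = -γ Σ_i σ_i² y_i². -/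
open Matrix Finset

theorem stmt_2 (n : ℕ) (A : Matrix (Fin n) (Fin n) ℝ) (σ : Fin n → ℝ) (γ : ℝ)
    (hσ : ∀ i, 0 < σ i)
    (hA : ∀ i j, i ≠ j → A i j + A j i - A i i - A j j = γ / 2 * (σ i ^ 2 + σ j ^ 2)) :
    ∀ y : Fin n → ℝ, y ≠ 0 → ∑ i, y i = 0 →
      2 * (y ⬝ᵥ A.mulVec y) = -γ * ∑ i, σ i ^ 2 * y i ^ 2 ∧
      (0 < γ → y ⬝ᵥ A.mulVec y < 0) ∧
      (γ < 0 → 0 < y ⬝ᵥ A.mulVec y) := by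
  intro y hy hsum
  -- positivity of ∑ σ_i^2 y_i^2
  have hne : ∃ i, y i ≠ 0 := by
    by_contra h
    push_neg at h
    exact hy (funext h)
  have hpos : 0 < ∑ i, σ i ^ 2 * y i ^ 2 := by
    obtain ⟨i, hi⟩ := hne
    have hσi := hσ i
    refine Finset.sum_pos' (fun j _ => by positivity) ⟨i, Finset.mem_univ i, by positivity⟩
  -- the key double sum
  set S : ℝ := ∑ i, ∑ j, y i * y j * (A i j + A j i - A i i - A j j) with hS
  have e0 : ∀ c : ℝ, ∑ j, c * y j = 0 := fun c => by
    rw [← Finset.mul_sum, hsum, mul_zero]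
  -- S = 2 yᵀAy
  have h1 : S = 2 * (y ⬝ᵥ A.mulVec y) := by
    have hq : y ⬝ᵥ A.mulVec y = ∑ i, ∑ j, y i * y j * A i j := by
      simp only [dotProduct, mulVec, Finset.mul_sum]
      exact Finset.sum_congr rfl fun i _ => Finset.sum_congr rfl fun j _ => by ring
    have ha : ∑ i, ∑ j, y i * y j * A j i = ∑ i, ∑ j, y i * y j * A i j := by
      rw [Finset.sum_comm]
      exact Finset.sum_congr rfl fun i _ => Finset.sum_congr rfl fun j _ => by ring
    have hb : ∑ i, ∑ j, y i * y j * A i i = 0 := by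
      refine Finset.sum_eq_zero fun i _ => ?_
      have : ∑ j, y i * y j * A i i = ∑ j, (y i * A i i) * y j :=
        Finset.sum_congr rfl fun j _ => by ring
      rw [this, e0]
    have hc : ∑ i, ∑ j, y i * y j * A j j = 0 := by
      rw [Finset.sum_comm]
      refine Finset.sum_eq_zero fun j _ => ?_
      have : ∑ i, y i * y j * A j j = ∑ i, (y j * A j j) * y i :=
        Finset.sum_congr rfl fun i _ => by ring
      rw [this, e0]
    have hexp : S = (∑ i, ∑ j, y i * y j * A i j) + (∑ i, ∑ j, y i * y j * A j i)
        - (∑ i, ∑ j, y i * y j * A i i) - (∑ i, ∑ j, y i * y j * A j j) := by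
      rw [hS]
      simp only [← Finset.sum_add_distrib, ← Finset.sum_sub_distrib]
      exact Finset.sum_congr rfl fun i _ => Finset.sum_congr rfl fun j _ => by ring
    rw [hexp, ha, hb, hc, hq]; ring
  -- S = -γ ∑ σ_i^2 y_i^2
  have h2 : S = -γ * ∑ i, σ i ^ 2 * y i ^ 2 := by
    have hf : S = ∑ i, ∑ j, (y i * y j * (γ / 2 * (σ i ^ 2 + σ j ^ 2))
        - (if i = j then y i * y j * (γ / 2 * (σ i ^ 2 + σ j ^ 2)) else 0)) := by
      rw [hS]
      refine Finset.sum_congr rfl fun i _ => Finset.sum_congr rfl fun j _ => ?_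
      by_cases hij : i = j
      · subst hij; simp
      · rw [hA i j hij]; simp [hij]
    rw [hf]
    have hg : ∑ i, ∑ j, y i * y j * (γ / 2 * (σ i ^ 2 + σ j ^ 2)) = 0 := by
      have hrow : ∀ i, ∑ j, y i * y j * (γ / 2 * (σ i ^ 2 + σ j ^ 2))
          = (y i * (γ / 2)) * (∑ j, σ j ^ 2 * y j) := by
        intro i
        have : ∀ j, y i * y j * (γ / 2 * (σ i ^ 2 + σ j ^ 2))
            = (y i * (γ / 2) * σ i ^ 2) * y j + (y i * (γ / 2)) * (σ j ^ 2 * y j) := by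
          intro j; ring
        rw [Finset.sum_congr rfl fun j _ => this j, Finset.sum_add_distrib, e0,
          zero_add, ← Finset.mul_sum]
      rw [Finset.sum_congr rfl fun i _ => hrow i]
      have : ∀ i, (y i * (γ / 2)) * (∑ j, σ j ^ 2 * y j)
          = ((γ / 2) * (∑ j, σ j ^ 2 * y j)) * y i := fun i => by ring
      rw [Finset.sum_congr rfl fun i _ => this i, e0]
    have hdiag : ∑ i, ∑ j, (if i = j then y i * y j * (γ / 2 * (σ i ^ 2 + σ j ^ 2)) else 0)
        = ∑ i, γ * (σ i ^ 2 * y i ^ 2) := by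
      refine Finset.sum_congr rfl fun i _ => ?_
      rw [Finset.sum_ite_eq univ i (fun j => y i * y j * (γ / 2 * (σ i ^ 2 + σ j ^ 2)))]
      simp; ring
    rw [Finset.sum_congr rfl fun i _ => Finset.sum_sub_distrib _ _, Finset.sum_sub_distrib,
      hg, hdiag, ← Finset.mul_sum]
    ring
  refine ⟨h1 ▸ h2, ?_, ?_⟩ <;> intro hγ <;> nlinarith [h1 ▸ h2, hpos]
end

section
/- Let Ã be a conditionally positive definite n×n matrix and p a point with p_1 + ... + p_n = 1, p not equal to any standard basis vector e_k, and (Ãp)_1 = ... = (Ãp)_n. Define h(x) = pᵀÃx - xᵀÃx - (1/2)Σ_j σ_j² x_j(1 - x_j) for x in the simplex Δ, where all σ_j > 0. Then there exists ε > 0 such that h(x) ≤ -ε for all x in the interior of Δ. -/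
open Matrix Finset

theorem stmt_4 (n : ℕ) (A : Matrix (Fin n) (Fin n) ℝ) (σ : Fin n → ℝ)
    (hσ : ∀ j, 0 < σ j)
    (hpos : ∀ y : Fin n → ℝ, y ≠ 0 → ∑ i, y i = 0 → 0 < y ⬝ᵥ A.mulVec y)
    (p : Fin n → ℝ) (hp1 : ∑ i, p i = 1)
    (hpv : ∀ k : Fin n, p ≠ Pi.single k 1)
    (hpe : ∀ i j, A.mulVec p i = A.mulVec p j) :
    ∃ ε > 0, ∀ x : Fin n → ℝ, (∀ i, 0 < x i) → (∑ i, x i = 1) →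
      p ⬝ᵥ A.mulVec x - x ⬝ᵥ A.mulVec x
        - (1 / 2) * ∑ j, σ j ^ 2 * x j * (1 - x j) ≤ -ε := by
  rcases Nat.eq_zero_or_pos n with hn | hn
  · subst hn; simp at hp1
  set g : (Fin n → ℝ) → ℝ := fun x =>
    -((p - x) ⬝ᵥ A.mulVec (p - x)) - (1 / 2) * ∑ j, σ j ^ 2 * x j * (1 - x j) with hg
  have i0 : Fin n := ⟨0, hn⟩
  -- identity
  have key : ∀ x : Fin n → ℝ, ∑ i, x i = 1 →
      p ⬝ᵥ A.mulVec x - x ⬝ᵥ A.mulVec x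
        - (1 / 2) * ∑ j, σ j ^ 2 * x j * (1 - x j) = g x := by
    intro x hx
    have h1 : (p - x) ⬝ᵥ A.mulVec p = 0 := by
      have : (p - x) ⬝ᵥ A.mulVec p = ∑ i, (p i - x i) * A.mulVec p i0 := by
        apply Finset.sum_congr rfl
        intro i _
        simp [Pi.sub_apply, hpe i i0]
      rw [this, ← Finset.sum_mul]
      simp [Finset.sum_sub_distrib, hp1, hx]
    have h2 : (p - x) ⬝ᵥ A.mulVec (p - x) = -(p ⬝ᵥ A.mulVec x - x ⬝ᵥ A.mulVec x) := by
      rw [Matrix.mulVec_sub, dotProduct_sub, h1, sub_dotProduct]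
      ring
    rw [hg]
    simp only [h2]
    ring
  -- g is negative on the standard simplex
  have hneg : ∀ x ∈ stdSimplex ℝ (Fin n), g x < 0 := by
    intro x hxS
    have hx1 : ∀ j, x j ≤ 1 := by
      intro j
      calc x j ≤ ∑ i, x i := Finset.single_le_sum (fun i _ => hxS.1 i) (Finset.mem_univ j)
      _ = 1 := hxS.2
    have hterm : ∀ j, 0 ≤ σ j ^ 2 * x j * (1 - x j) := by
      intro j
      have h0 := hxS.1 j
      have h1 := hx1 j
      exact mul_nonneg (mul_nonneg (sq_nonneg _) h0) (by linarith)
    by_cases hxp : x = p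
    · subst hxp
      have hj : ∃ j, 0 < x j ∧ x j < 1 := by
        by_contra h
        push_neg at h
        obtain ⟨k, hk⟩ : ∃ k, 0 < x k := by
          by_contra h2
          push_neg at h2
          have : ∀ i ∈ Finset.univ, x i = 0 := fun i _ => le_antisymm (h2 i) (hxS.1 i)
          rw [Finset.sum_congr rfl this] at hp1
          simp at hp1
        have hk1 : x k = 1 := le_antisymm (hx1 k) (h k hk)
        apply hpv k
        funext j
        by_cases hjk : j = k
        · subst hjk; simp [hk1]
        · simp [Pi.single_apply, hjk]
          have hsum : ∑ i ∈ Finset.univ.erase k, x i = 0 := by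
            have := Finset.add_sum_erase Finset.univ x (Finset.mem_univ k)
            rw [hp1, hk1] at this
            linarith
          have := Finset.sum_eq_zero_iff_of_nonneg
            (fun i _ => hxS.1 i) |>.mp hsum j (Finset.mem_erase.mpr ⟨hjk, Finset.mem_univ j⟩)
          exact this
      obtain ⟨j, hj0, hj1⟩ := hj
      have hsum : 0 < ∑ j, σ j ^ 2 * x j * (1 - x j) := by
        apply Finset.sum_pos' (fun i _ => hterm i) ⟨j, Finset.mem_univ j, ?_⟩
        have hσj := hσ j
        exact mul_pos (mul_pos (pow_pos hσj 2) hj0) (by linarith)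
      rw [hg]
      simp only [sub_self, Matrix.mulVec_zero]
      simp only [dotProduct_zero]
      linarith
    · have hy : p - x ≠ 0 := sub_ne_zero.mpr (Ne.symm hxp)
      have hys : ∑ i, (p - x) i = 0 := by
        simp [Finset.sum_sub_distrib, hp1, hxS.2]
      have := hpos (p - x) hy hys
      have hsum : 0 ≤ ∑ j, σ j ^ 2 * x j * (1 - x j) :=
        Finset.sum_nonneg (fun i _ => hterm i)
      rw [hg]
      simp only
      linarith
  -- continuity
  have hcont : ContinuousOn g (stdSimplex ℝ (Fin n)) := by
    apply Continuous.continuousOn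
    rw [hg]
    simp only [dotProduct, Matrix.mulVec]
    fun_prop
  -- compactness, max
  have hne : (stdSimplex ℝ (Fin n)).Nonempty := by
    refine ⟨fun _ => (n : ℝ)⁻¹, fun i => by positivity, ?_⟩
    simp
    field_simp
  obtain ⟨a, haS, ha⟩ := (isCompact_stdSimplex ℝ (Fin n)).exists_isMaxOn hne hcont
  refine ⟨-(g a), by linarith [hneg a haS], ?_⟩
  intro x hx hx1
  have hxS : x ∈ stdSimplex ℝ (Fin n) := ⟨fun i => (hx i).le, hx1⟩
  rw [key x hx1]
  have := ha hxS
  simp at this ⊢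
  linarith
end

section
/- Let n = 3 and let Ã be a conditionally positive definite 3×3 matrix whose first column has all entries equal (ã_{11} = ã_{21} = ã_{31}). Then ã_{12} < ã_{22} and ã_{13} < ã_{33}, and moreover ã_{22} > ã_{32} or ã_{33} > ã_{23}; consequently strategy 2 or strategy 3 is a strict Nash equilibrium of Ã (i.e., ã_{kk} > ã_{jk} for all j ≠ k, for k = 2 or k = 3). -/
open Matrix Finset

theorem stmt_6 (A : Matrix (Fin 3) (Fin 3) ℝ)
    (hpos : ∀ y : Fin 3 → ℝ, y ≠ 0 → ∑ i, y i = 0 → 0 < y ⬝ᵥ A.mulVec y)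
    (hcol : A 0 0 = A 1 0 ∧ A 0 0 = A 2 0) :
    A 0 1 < A 1 1 ∧ A 0 2 < A 2 2 ∧
    (A 1 1 > A 2 1 ∨ A 2 2 > A 1 2) ∧
    ((∀ j ≠ (1 : Fin 3), A 1 1 > A j 1) ∨ (∀ j ≠ (2 : Fin 3), A 2 2 > A j 2)) := by
  obtain ⟨h10, h20⟩ := hcol
  have h1 := hpos ![-1, 1, 0] (by
    intro h; have := congrFun h 1; simp at this) (by
    simp [Fin.sum_univ_three])
  have h2 := hpos ![-1, 0, 1] (by
    intro h; have := congrFun h 2; simp at this) (by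
    simp [Fin.sum_univ_three])
  have h3 := hpos ![0, -1, 1] (by
    intro h; have := congrFun h 2; simp at this) (by
    simp [Fin.sum_univ_three])
  simp [dotProduct, mulVec, Fin.sum_univ_three] at h1 h2 h3
  have e1 : A 0 1 < A 1 1 := by nlinarith
  have e2 : A 0 2 < A 2 2 := by nlinarith
  have e3 : A 1 1 > A 2 1 ∨ A 2 2 > A 1 2 := by
    by_contra hc
    push_neg at hc
    nlinarith [hc.1, hc.2]
  refine ⟨e1, e2, e3, ?_⟩
  rcases e3 with h | h
  · left
    intro j hj
    fin_cases j <;> simp_all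
  · right
    intro j hj
    fin_cases j <;> simp_all
end

section
/- Let A be an n×n matrix satisfying a_{ij} + a_{ji} - a_{ii} - a_{jj} = (γ/2)(σ_i² + σ_j²) for all i ≠ j with γ ≠ 0 and all σ_i > 0. Then there is at most one vector α ∈ R^n with α₁ + ... + αₙ = γ such that (Ãα)₁ = ... = (Ãα)ₙ, where ã_{ij} = a_{ij} - σ_i²/2. -/
open Matrix Finset

theorem stmt_11 (n : ℕ) (A : Matrix (Fin n) (Fin n) ℝ) (σ : Fin n → ℝ) (γ : ℝ)
    (hσ : ∀ i, 0 < σ i) (hγ : γ ≠ 0)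
    (hA : ∀ i j, i ≠ j → A i j + A j i - A i i - A j j = γ / 2 * (σ i ^ 2 + σ j ^ 2))
    (Atil : Matrix (Fin n) (Fin n) ℝ) (hAt : ∀ i j, Atil i j = A i j - σ i ^ 2 / 2)
    (α α' : Fin n → ℝ) (hs : ∑ i, α i = γ) (hs' : ∑ i, α' i = γ)
    (he : ∀ i j, Atil.mulVec α i = Atil.mulVec α j)
    (he' : ∀ i j, Atil.mulVec α' i = Atil.mulVec α' j) :
    α = α' := by
  set β : Fin n → ℝ := α - α' with hβ
  have hsum : ∑ i, β i = 0 := by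
    simp [hβ, Finset.sum_sub_distrib, hs, hs']
  -- Ãβ is constant
  have hmvc : ∀ i j, Atil.mulVec β i = Atil.mulVec β j := by
    intro i j
    rw [hβ, Matrix.mulVec_sub, Pi.sub_apply, Pi.sub_apply, he i j, he' i j]
  -- key matrix identity
  have key : ∀ i j, Atil i j + Atil j i = Atil i i + Atil j j
      + γ/2*(σ i^2 + σ j^2) + (if i = j then -(γ * σ i^2) else 0) := by
    intro i j
    by_cases h : i = j
    · subst h; rw [if_pos rfl]; ring
    · rw [if_neg h]
      have := hA i j h
      rw [hAt i j, hAt j i, hAt i i, hAt j j]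
      linarith
  -- quadratic form is zero
  have hquad : ∑ i, ∑ j, β i * β j * Atil i j = 0 := by
    have h1 : ∑ i, ∑ j, β i * β j * Atil i j = ∑ i, β i * Atil.mulVec β i := by
      refine Finset.sum_congr rfl fun i _ => ?_
      rw [Matrix.mulVec, dotProduct, Finset.mul_sum]
      refine Finset.sum_congr rfl fun j _ => ?_
      ring
    rw [h1]
    rcases Nat.eq_zero_or_pos n with h0 | h0
    · subst h0; simp
    · have : ∀ i, Atil.mulVec β i = Atil.mulVec β ⟨0, h0⟩ := fun i => hmvc i ⟨0, h0⟩
      calc ∑ i, β i * Atil.mulVec β i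
          = ∑ i, β i * Atil.mulVec β ⟨0, h0⟩ := by
            refine Finset.sum_congr rfl fun i _ => by rw [this i]
        _ = (∑ i, β i) * Atil.mulVec β ⟨0, h0⟩ := by rw [Finset.sum_mul]
        _ = 0 := by rw [hsum, zero_mul]
  -- 2 * quadratic form = -γ ∑ βᵢ²σᵢ²
  have h2Q : (2:ℝ) * ∑ i, ∑ j, β i * β j * Atil i j
      = -(γ * ∑ i, β i^2 * σ i^2) := by
    have swap : ∑ i, ∑ j, β i * β j * Atil j i = ∑ i, ∑ j, β i * β j * Atil i j := by
      rw [Finset.sum_comm]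
      exact Finset.sum_congr rfl fun i _ => Finset.sum_congr rfl fun j _ => by ring
    have expand : ∑ i, ∑ j, β i * β j * (Atil i j + Atil j i)
        = ∑ i, ∑ j, β i * β j * (Atil i i + Atil j j + γ/2*(σ i^2 + σ j^2))
          + ∑ i, β i * β i * (-(γ * σ i^2)) := by
      have : ∀ i, ∑ j, β i * β j * (Atil i j + Atil j i)
          = ∑ j, (β i * β j * (Atil i i + Atil j j + γ/2*(σ i^2 + σ j^2))
            + β i * β j * (if i = j then -(γ * σ i^2) else 0)) := by
        intro i
        refine Finset.sum_congr rfl fun j _ => ?_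
        rw [key i j]; ring
      calc ∑ i, ∑ j, β i * β j * (Atil i j + Atil j i)
          = ∑ i, ∑ j, (β i * β j * (Atil i i + Atil j j + γ/2*(σ i^2 + σ j^2))
              + β i * β j * (if i = j then -(γ * σ i^2) else 0)) := by
            exact Finset.sum_congr rfl fun i _ => this i
        _ = ∑ i, (∑ j, β i * β j * (Atil i i + Atil j j + γ/2*(σ i^2 + σ j^2))
              + ∑ j, β i * β j * (if i = j then -(γ * σ i^2) else 0)) := by
            exact Finset.sum_congr rfl fun i _ => Finset.sum_add_distrib
        _ = ∑ i, ∑ j, β i * β j * (Atil i i + Atil j j + γ/2*(σ i^2 + σ j^2))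
              + ∑ i, ∑ j, β i * β j * (if i = j then -(γ * σ i^2) else 0) := by
            rw [Finset.sum_add_distrib]
        _ = _ := by
            congr 1
            refine Finset.sum_congr rfl fun i _ => ?_
            rw [Finset.sum_eq_single i (fun j _ hj => by rw [if_neg (Ne.symm hj), mul_zero])
              (fun h => absurd (Finset.mem_univ i) h)]
            rw [if_pos rfl]
    -- the main part vanishes thanks to ∑ β = 0
    have main0 : ∑ i, ∑ j, β i * β j * (Atil i i + Atil j j + γ/2*(σ i^2 + σ j^2)) = 0 := by
      have hinner : ∀ i, ∑ j, β i * β j * (Atil i i + Atil j j + γ/2*(σ i^2 + σ j^2))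
          = β i * (Atil i i + γ/2 * σ i^2) * (∑ j, β j)
            + β i * (∑ j, β j * (Atil j j + γ/2 * σ j^2)) := by
        intro i
        rw [Finset.mul_sum, Finset.mul_sum, ← Finset.sum_add_distrib]
        refine Finset.sum_congr rfl fun j _ => by ring
      calc ∑ i, ∑ j, β i * β j * (Atil i i + Atil j j + γ/2*(σ i^2 + σ j^2))
          = ∑ i, (β i * (Atil i i + γ/2 * σ i^2) * (∑ j, β j)
              + β i * (∑ j, β j * (Atil j j + γ/2 * σ j^2))) := by
            exact Finset.sum_congr rfl fun i _ => hinner i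
        _ = ∑ i, β i * (∑ j, β j * (Atil j j + γ/2 * σ j^2)) := by
            refine Finset.sum_congr rfl fun i _ => ?_
            rw [hsum]; ring
        _ = (∑ i, β i) * (∑ j, β j * (Atil j j + γ/2 * σ j^2)) := by
            rw [Finset.sum_mul]
        _ = 0 := by rw [hsum, zero_mul]
    have lhs2 : ∑ i, ∑ j, β i * β j * (Atil i j + Atil j i)
        = 2 * ∑ i, ∑ j, β i * β j * Atil i j := by
      have split : ∑ i, ∑ j, β i * β j * (Atil i j + Atil j i)
          = (∑ i, ∑ j, β i * β j * Atil i j) + ∑ i, ∑ j, β i * β j * Atil j i := by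
        rw [← Finset.sum_add_distrib]
        refine Finset.sum_congr rfl fun i _ => ?_
        rw [← Finset.sum_add_distrib]
        refine Finset.sum_congr rfl fun j _ => by ring
      rw [split, swap]; ring
    have := expand
    rw [lhs2, main0, zero_add] at this
    rw [this, Finset.mul_sum, ← Finset.sum_neg_distrib]
    exact Finset.sum_congr rfl fun i _ => by ring
  rw [hquad, mul_zero] at h2Q
  have hsum0 : ∑ i, β i^2 * σ i^2 = 0 := by
    have : γ * ∑ i, β i^2 * σ i^2 = 0 := by linarith
    exact (mul_eq_zero.mp this).resolve_left hγ
  have hterm : ∀ i ∈ Finset.univ, β i^2 * σ i^2 = 0 := by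
    refine (Finset.sum_eq_zero_iff_of_nonneg fun i _ => ?_).mp hsum0
    positivity
  funext i
  have h := hterm i (Finset.mem_univ i)
  have hσi : σ i ≠ 0 := ne_of_gt (hσ i)
  have : β i = 0 := by
    have := mul_eq_zero.mp h
    rcases this with h1 | h2
    · exact pow_eq_zero_iff (by norm_num) |>.mp h1
    · exact absurd (pow_eq_zero_iff (by norm_num) |>.mp h2) hσi
  have := sub_eq_zero.mp (by simpa [hβ] using this)
  exact this
end

section
/- Let Ã be an n×n matrix with ã_{ij} + ã_{ji} - ã_{ii} - ã_{jj} = (γ/2)(σ_i² + σ_j²) for all i ≠ j, γ > 0, σ_i > 0. If p is in the interior of the simplex with (Ãp)₁ = ... = (Ãp)ₙ, then p is the unique interior Nash equilibrium of Ã. -/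
open Matrix Finset

theorem stmt_12 (n : ℕ) (Atil : Matrix (Fin n) (Fin n) ℝ) (σ : Fin n → ℝ) (γ : ℝ)
    (hσ : ∀ i, 0 < σ i) (hγ : 0 < γ)
    (hA : ∀ i j, i ≠ j →
      Atil i j + Atil j i - Atil i i - Atil j j = γ / 2 * (σ i ^ 2 + σ j ^ 2))
    (p : Fin n → ℝ) (hp0 : ∀ i, 0 < p i) (hp1 : ∑ i, p i = 1)
    (hpe : ∀ i j, Atil.mulVec p i = Atil.mulVec p j) :
    (∀ q : Fin n → ℝ, (∀ i, 0 ≤ q i) → ∑ i, q i = 1 →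
      q ⬝ᵥ Atil.mulVec p ≤ p ⬝ᵥ Atil.mulVec p) ∧
    (∀ p' : Fin n → ℝ, (∀ i, 0 < p' i) → (∑ i, p' i = 1) →
      (∀ q : Fin n → ℝ, (∀ i, 0 ≤ q i) → ∑ i, q i = 1 →
        q ⬝ᵥ Atil.mulVec p' ≤ p' ⬝ᵥ Atil.mulVec p') → p' = p) := by
  have hn : Nonempty (Fin n) := by
    rcases Nat.eq_zero_or_pos n with h | h
    · subst h; simp at hp1
    · exact ⟨⟨0, h⟩⟩
  obtain ⟨i₀⟩ := hn
  -- Ãp is constant, so payoffs are constant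
  have keyp : ∀ i, Atil.mulVec p i = p ⬝ᵥ Atil.mulVec p := by
    intro i
    have : p ⬝ᵥ Atil.mulVec p = ∑ j, p j * Atil.mulVec p i := by
      unfold dotProduct
      exact Finset.sum_congr rfl fun j _ => by rw [hpe j i]
    rw [this, ← Finset.sum_mul, hp1, one_mul]
  have part1 : ∀ q : Fin n → ℝ, (∀ i, 0 ≤ q i) → ∑ i, q i = 1 →
      q ⬝ᵥ Atil.mulVec p ≤ p ⬝ᵥ Atil.mulVec p := by
    intro q hq hq1
    have : q ⬝ᵥ Atil.mulVec p = ∑ j, q j * (p ⬝ᵥ Atil.mulVec p) := by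
      unfold dotProduct
      exact Finset.sum_congr rfl fun j _ => by rw [keyp j]; rfl
    rw [this, ← Finset.sum_mul, hq1, one_mul]
  refine ⟨part1, ?_⟩
  intro p' hp'0 hp'1 hnash
  -- Ãp' is constant
  have hle : ∀ i, Atil.mulVec p' i ≤ p' ⬝ᵥ Atil.mulVec p' := by
    intro i
    have h := hnash (fun j => if j = i then 1 else 0)
      (fun j => by by_cases h : j = i <;> simp [h]) (by simp)
    simpa [dotProduct, ite_mul] using h
  have keyp' : ∀ i, Atil.mulVec p' i = p' ⬝ᵥ Atil.mulVec p' := by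
    intro i
    by_contra hne
    have hlt : Atil.mulVec p' i < p' ⬝ᵥ Atil.mulVec p' := lt_of_le_of_ne (hle i) hne
    have h1 : p' ⬝ᵥ Atil.mulVec p' < ∑ j, p' j * (p' ⬝ᵥ Atil.mulVec p') := by
      apply Finset.sum_lt_sum (fun j _ => mul_le_mul_of_nonneg_left (hle j) (hp'0 j).le)
      exact ⟨i, Finset.mem_univ i, mul_lt_mul_of_pos_left hlt (hp'0 i)⟩
    rw [← Finset.sum_mul, hp'1, one_mul] at h1
    exact lt_irrefl _ h1
  -- y := p' - p
  set y : Fin n → ℝ := fun i => p' i - p i with hy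
  have hS : ∑ i, y i = 0 := by
    simp [hy, Finset.sum_sub_distrib, hp1, hp'1]
  have hAy : ∀ i, Atil.mulVec y i = p' ⬝ᵥ Atil.mulVec p' - p ⬝ᵥ Atil.mulVec p := by
    intro i
    have : Atil.mulVec y i = Atil.mulVec p' i - Atil.mulVec p i := by
      simp [mulVec, dotProduct, hy, mul_sub, Finset.sum_sub_distrib]
    rw [this, keyp' i, keyp i]
  have hyAy : y ⬝ᵥ Atil.mulVec y = 0 := by
    have : y ⬝ᵥ Atil.mulVec y
        = ∑ i, y i * (p' ⬝ᵥ Atil.mulVec p' - p ⬝ᵥ Atil.mulVec p) := by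
      unfold dotProduct
      exact Finset.sum_congr rfl fun i _ => by rw [hAy i]; rfl
    rw [this, ← Finset.sum_mul, hS, zero_mul]
  -- structural identity: 2 yᵀÃy = -γ Σ σᵢ² yᵢ²
  set c : Fin n → ℝ := fun i => Atil i i + γ / 2 * σ i ^ 2 with hc
  have hcross : ∀ i j, y i * y j * (Atil i j + Atil j i)
      = y i * y j * (c i + c j) - (if i = j then γ * σ i ^ 2 * y i ^ 2 else 0) := by
    intro i j
    by_cases h : i = j
    · subst h; simp [hc]; ring
    · have h2 : Atil i j + Atil j i = c i + c j := by
        have := hA i j h; simp [hc]; linarith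
      rw [if_neg h, sub_zero, h2]
  have hsum2 : 2 * (y ⬝ᵥ Atil.mulVec y)
      = ∑ i, ∑ j, y i * y j * (Atil i j + Atil j i) := by
    have e1 : y ⬝ᵥ Atil.mulVec y = ∑ i, ∑ j, y i * (Atil i j * y j) := by
      simp [dotProduct, mulVec, Finset.mul_sum]
    have e2 : y ⬝ᵥ Atil.mulVec y = ∑ i, ∑ j, y j * (Atil j i * y i) := by
      rw [e1, Finset.sum_comm]
    calc 2 * (y ⬝ᵥ Atil.mulVec y)
        = (∑ i, ∑ j, y i * (Atil i j * y j)) + ∑ i, ∑ j, y j * (Atil j i * y i) := by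
          rw [← e1, ← e2]; ring
      _ = ∑ i, ∑ j, (y i * (Atil i j * y j) + y j * (Atil j i * y i)) := by
          rw [← Finset.sum_add_distrib]
          exact Finset.sum_congr rfl fun i _ => (Finset.sum_add_distrib).symm
      _ = ∑ i, ∑ j, y i * y j * (Atil i j + Atil j i) := by
          exact Finset.sum_congr rfl fun i _ => Finset.sum_congr rfl fun j _ => by ring
  have hcsum : ∑ i, ∑ j, y i * y j * (c i + c j) = 0 := by
    have inner : ∀ i, ∑ j, y i * y j * (c i + c j)
        = y i * c i * (∑ j, y j) + y i * (∑ j, y j * c j) := by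
      intro i
      rw [Finset.mul_sum, Finset.mul_sum, ← Finset.sum_add_distrib]
      exact Finset.sum_congr rfl fun j _ => by ring
    rw [Finset.sum_congr rfl fun i _ => inner i]
    rw [hS]
    simp only [mul_zero, zero_add]
    rw [← Finset.sum_mul, hS, zero_mul]
  have hdiag : ∑ i, ∑ j, (if i = j then γ * σ i ^ 2 * y i ^ 2 else 0)
      = ∑ i, γ * σ i ^ 2 * y i ^ 2 := by
    exact Finset.sum_congr rfl fun i _ => by simp
  have hquad : 2 * (y ⬝ᵥ Atil.mulVec y) = -(∑ i, γ * σ i ^ 2 * y i ^ 2) := by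
    rw [hsum2]
    rw [Finset.sum_congr rfl fun i _ => Finset.sum_congr rfl fun j _ => hcross i j]
    rw [Finset.sum_congr rfl fun i (_ : i ∈ Finset.univ) => (Finset.sum_sub_distrib _ _)]
    rw [Finset.sum_sub_distrib, hcsum, hdiag, zero_sub]
  rw [hyAy, mul_zero] at hquad
  have hzero : ∑ i, γ * σ i ^ 2 * y i ^ 2 = 0 := by linarith
  have heach : ∀ i ∈ Finset.univ, γ * σ i ^ 2 * y i ^ 2 = 0 := by
    rw [← Finset.sum_eq_zero_iff_of_nonneg]
    · exact hzero
    · intro i _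
      have := hσ i
      positivity
  funext i
  have h := heach i (Finset.mem_univ i)
  have hσi := hσ i
  have hy2 : y i ^ 2 = 0 := by
    rcases mul_eq_zero.mp h with h' | h'
    · exact absurd h' (by positivity)
    · exact h'
  have : y i = 0 := pow_eq_zero_iff two_ne_zero |>.mp hy2
  have : p' i - p i = 0 := this
  linarith
end

section
/- Let A satisfy a_{ij} + a_{ji} = a_{ii} + a_{jj} for all i,j, and let β ∈ R^n satisfy Σβ_i = 0, all coordinates of Ãβ equal, and βᵀÃ ≠ 0 (where ã_{ij} = a_{ij} - σ_i²/2, σ_i > 0). Set c = 2(βᵀÃ)₁ / (Σ_i σ_i² β_i²) and α_i = cβ_i. Then c ≠ 0 and Σ_i ã_{ii} α_i - (1/2) Σ_i σ_i² α_i² = (Ãα)₁. -/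
open Matrix Finset

theorem stmt_14 (n : ℕ) (A : Matrix (Fin (n + 1)) (Fin (n + 1)) ℝ)
    (σ : Fin (n + 1) → ℝ) (hσ : ∀ i, 0 < σ i)
    (hA : ∀ i j, A i j + A j i = A i i + A j j)
    (Atil : Matrix (Fin (n + 1)) (Fin (n + 1)) ℝ)
    (hAt : ∀ i j, Atil i j = A i j - σ i ^ 2 / 2)
    (β : Fin (n + 1) → ℝ) (hβ : ∑ i, β i = 0)
    (he : ∀ i j, Atil.mulVec β i = Atil.mulVec β j)
    (hne : β ᵥ* Atil ≠ 0)
    (c : ℝ) (hc : c = 2 * (β ᵥ* Atil) 0 / ∑ i, σ i ^ 2 * β i ^ 2)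
    (α : Fin (n + 1) → ℝ) (hα : ∀ i, α i = c * β i) :
    c ≠ 0 ∧
    ∑ i, Atil i i * α i - (1 / 2) * ∑ i, σ i ^ 2 * α i ^ 2 = Atil.mulVec α 0 := by
  have hβ0 : β ≠ 0 := by
    intro h
    apply hne
    subst h
    ext j
    simp [Matrix.vecMul, dotProduct]
  have hS : 0 < ∑ i, σ i ^ 2 * β i ^ 2 := by
    obtain ⟨k, hk⟩ := Function.ne_iff.mp hβ0
    apply Finset.sum_pos' (fun i _ => by positivity)
    refine ⟨k, mem_univ k, ?_⟩
    have := hσ k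
    have hk' : β k ≠ 0 := hk
    positivity
  have key : ∀ j, (β ᵥ* Atil) j = (∑ i, β i * Atil i i) - Atil.mulVec β j := by
    intro j
    have h1 : ∀ i, Atil i j = Atil i i + Atil j j - Atil j i := by
      intro i
      have h2 := hA i j
      rw [hAt i j, hAt i i, hAt j j, hAt j i]
      linarith
    simp only [Matrix.vecMul, Matrix.mulVec, dotProduct]
    calc ∑ i, β i * Atil i j
        = ∑ i, (β i * Atil i i + Atil j j * β i - Atil j i * β i) := by
          exact Finset.sum_congr rfl fun i _ => by rw [h1 i]; ring
      _ = (∑ i, β i * Atil i i) + Atil j j * ∑ i, β i - ∑ i, Atil j i * β i := by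
          rw [Finset.sum_sub_distrib, Finset.sum_add_distrib, Finset.mul_sum]
      _ = _ := by rw [hβ]; ring
  have hK : (β ᵥ* Atil) 0 ≠ 0 := by
    intro h0
    apply hne
    ext j
    have := key j
    rw [he j 0] at this
    rw [this, ← key 0, h0]
    rfl
  have hc0 : c ≠ 0 := by
    rw [hc]
    exact div_ne_zero (by positivity) (ne_of_gt hS)
  refine ⟨hc0, ?_⟩
  have hmul : Atil.mulVec α 0 = c * Atil.mulVec β 0 := by
    simp only [Matrix.mulVec, dotProduct, hα, Finset.mul_sum]
    exact Finset.sum_congr rfl fun i _ => by ring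
  have hKey := key 0
  have hcS : c * ∑ i, σ i ^ 2 * β i ^ 2 = 2 * (β ᵥ* Atil) 0 := by
    rw [hc]
    field_simp
  have e1 : ∑ i, Atil i i * α i = c * ∑ i, β i * Atil i i := by
    simp only [hα, Finset.mul_sum]
    exact Finset.sum_congr rfl fun i _ => by ring
  have e2 : ∑ i, σ i ^ 2 * α i ^ 2 = c * c * ∑ i, σ i ^ 2 * β i ^ 2 := by
    simp only [hα, Finset.mul_sum]
    exact Finset.sum_congr rfl fun i _ => by ring
  rw [e1, e2, hmul]
  have : Atil.mulVec β 0 = (∑ i, β i * Atil i i) - (β ᵥ* Atil) 0 := by linarith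
  rw [this]
  linear_combination (-(c/2)) * hcS
end
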